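/- Let M be a monoid of I-type with atom set X and Garside element Δ, associated to a non-degenerate symmetric solution (X,S). If a ∈ M is a divisor of Δ of length k (i.e., a simple element), then a has exactly k! distinct word representatives over X. -/

import Mathlib

/-- The defining relations of the structure monoid: `x y = g_x(y) f_y(x)`. -/
def structRel {X : Type*} (g f : X → X → X) :
    FreeMonoid X → FreeMonoid X → Prop :=
  fun a b => ∃ x y : X, a = FreeMonoid.of x * FreeMonoid.of y ∧
    b = FreeMonoid.of (g x y) * FreeMonoid.of (f y x)

/-- `S` acting on the first two components of `X³`. -/
def S12 {X : Type*} (S : X × X → X × X) : X × X × X → X × X × X :=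
  fun p => ((S (p.1, p.2.1)).1, (S (p.1, p.2.1)).2, p.2.2)

/-- `S` acting on the last two components of `X³`. -/
def S23 {X : Type*} (S : X × X → X × X) : X × X × X → X × X × X :=
  fun p => (p.1, (S (p.2.1, p.2.2)).1, (S (p.2.1, p.2.2)).2)

/-- The braid relation `S¹²S²³S¹² = S²³S¹²S²³`. -/
def Braided {X : Type*} (S : X × X → X × X) : Prop :=
  S12 S ∘ S23 S ∘ S12 S = S23 S ∘ S12 S ∘ S23 S


namespace Stmt6

variable {X : Type*}

/-- Triangular bijection trivializing the braided rewriting system. -/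
def Tm (g : X → X → X) : List X → List X
  | [] => []
  | x :: w => x :: (Tm g w).map (g x)

/-- Composite translation along a word. -/
def Gc (g : X → X → X) : List X → X → X
  | [] => id
  | x :: w => g x ∘ Gc g w

theorem Tm_length (g : X → X → X) : ∀ w : List X, (Tm g w).length = w.length
  | [] => rfl
  | x :: w => by simp [Tm, Tm_length g w]

theorem Tm_append (g : X → X → X) :
    ∀ u v : List X, Tm g (u ++ v) = Tm g u ++ (Tm g v).map (Gc g u)
  | [], v => by simp [Tm, Gc]
  | x :: u, v => by
    simp [Tm, Gc, Tm_append g u v, List.map_map, Function.comp]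

theorem Gc_append (g : X → X → X) :
    ∀ u v : List X, Gc g (u ++ v) = Gc g u ∘ Gc g v
  | [], v => rfl
  | x :: u, v => by
    simp [Gc, Gc_append g u v]; rfl

theorem Tm_inj (g : X → X → X) (hg : ∀ x, Function.Injective (g x)) :
    ∀ u v : List X, Tm g u = Tm g v → u = v
  | [], [], _ => rfl
  | [], _ :: _, h => by simp [Tm] at h
  | _ :: _, [], h => by simp [Tm] at h
  | x :: u, y :: v, h => by
    obtain ⟨rfl, h2⟩ : x = y ∧ (Tm g u).map (g x) = (Tm g v).map (g y) := by
      simpa [Tm] using h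
    obtain rfl := Tm_inj g hg u v (List.map_injective_iff.2 (hg x) h2)
    rfl

theorem Tm_surj (g : X → X → X) (hg : ∀ x, Function.Bijective (g x)) (a : List X) :
    ∃ u : List X, Tm g u = a := by
  suffices h : ∀ (n : ℕ) (a : List X), a.length = n → ∃ u, Tm g u = a from h _ a rfl
  intro n
  induction n with
  | zero =>
    intro a hn
    cases a with
    | nil => exact ⟨[], rfl⟩
    | cons => simp at hn
  | succ n ih =>
    intro a hn
    cases a with
    | nil => simp at hn
    | cons x b =>
      obtain ⟨u, hu⟩ := ih (b.map (Equiv.ofBijective (g x) (hg x)).symm)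
        (by simpa using Nat.succ_injective hn)
      refine ⟨x :: u, ?_⟩
      have h : ∀ z, g x ((Equiv.ofBijective (g x) (hg x)).symm z) = z := fun z =>
        Equiv.ofBijective_apply_symm_apply _ _ _
      simp [Tm, hu, List.map_map, Function.comp_def, h]


theorem forward (g f : X → X → X)
    (hid : ∀ x y, g (g x y) (f y x) = x)
    (hY : ∀ x y z, g (g x y) (g (f y x) z) = g x (g y z)) :
    ∀ {u v : FreeMonoid X}, ConGen.Rel (structRel g f) u v →
      (Tm g (FreeMonoid.toList u)).Perm (Tm g (FreeMonoid.toList v)) ∧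
        Gc g (FreeMonoid.toList u) = Gc g (FreeMonoid.toList v) := by
  intro u v h
  induction h with
  | of a b hab =>
    obtain ⟨x, y, rfl, rfl⟩ := hab
    constructor
    · show (Tm g [x, y]).Perm (Tm g [g x y, f y x])
      simp only [Tm, List.map, hid]
      exact List.Perm.swap (g x y) x []
    · show Gc g [x, y] = Gc g [g x y, f y x]
      funext z
      simp only [Gc, Function.comp_apply, id_eq]
      exact (hY x y z).symm
  | refl => exact ⟨List.Perm.refl _, rfl⟩
  | symm _ ih => exact ⟨ih.1.symm, ih.2.symm⟩
  | trans _ _ ih1 ih2 => exact ⟨ih1.1.trans ih2.1, ih1.2.trans ih2.2⟩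
  | mul _ _ ih1 ih2 =>
    constructor
    · show (Tm g (_ ++ _)).Perm (Tm g (_ ++ _))
      rw [Tm_append, Tm_append, ih1.2]
      exact ih1.1.append (ih2.1.map _)
    · show Gc g (_ ++ _) = Gc g (_ ++ _)
      rw [Gc_append, Gc_append, ih1.2, ih2.2]

theorem backward (g f : X → X → X) (hg : ∀ x, Function.Bijective (g x))
    (hid : ∀ x y, g (g x y) (f y x) = x)
    (hY : ∀ x y z, g (g x y) (g (f y x) z) = g x (g y z)) :
    ∀ {a b : List X}, a.Perm b →
    ∀ (φ : X → X), Function.Bijective φ → ∀ u : List X, Tm g u = a.map φ →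
    ∃ v : List X, Tm g v = b.map φ ∧
      ConGen.Rel (structRel g f) (FreeMonoid.ofList u) (FreeMonoid.ofList v) := by
  intro a b h
  induction h with
  | nil =>
    intro φ hφ u hu
    exact ⟨u, hu, ConGen.Rel.refl _⟩
  | cons x h ih =>
    rename_i l₁ l₂
    intro φ hφ u hu
    match u with
    | [] => simp [Tm] at hu
    | p :: u₁ =>
      obtain ⟨rfl, h2⟩ : p = φ x ∧ (Tm g u₁).map (g p) = l₁.map φ := by
        simpa [Tm] using hu
      set ep := Equiv.ofBijective (g (φ x)) (hg (φ x)) with hep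
      have hsymm : ∀ z, ep.symm (g (φ x) z) = z := fun z => ep.symm_apply_apply z
      have hap : ∀ z, g (φ x) (ep.symm z) = z := fun z => ep.apply_symm_apply z
      have htm : Tm g u₁ = l₁.map (ep.symm ∘ φ) := by
        have := congrArg (List.map ep.symm) h2
        simpa [List.map_map, Function.comp_def, hsymm] using this
      obtain ⟨v₁, hv₁, hrel⟩ := ih (ep.symm ∘ φ)
        ((Equiv.bijective ep.symm).comp hφ) u₁ htm
      refine ⟨φ x :: v₁, ?_, ?_⟩
      · show φ x :: (Tm g v₁).map (g (φ x)) = φ x :: l₂.map φ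
        rw [hv₁]
        simp [List.map_map, Function.comp_def, hap]
      · exact ConGen.Rel.mul (ConGen.Rel.refl (FreeMonoid.of (φ x))) hrel
  | swap x y l =>
    intro φ hφ u hu
    match u with
    | [] => simp [Tm] at hu
    | [p] => simp [Tm] at hu
    | p :: q :: r =>
      obtain ⟨rfl, h2, h3⟩ : p = φ y ∧ g p q = φ x ∧
          List.map (g p) (List.map (g q) (Tm g r)) = l.map φ := by
        simpa [Tm] using hu
      refine ⟨g (φ y) q :: f q (φ y) :: r, ?_, ?_⟩
      · simp only [Tm, List.map_cons, List.map_map]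
        have e1 : g (g (φ y) q) (f q (φ y)) = φ y := hid (φ y) q
        have e2 : g (g (φ y) q) ∘ g (f q (φ y)) = g (φ y) ∘ g q :=
          funext fun z => hY (φ y) q z
        rw [List.map_map] at h3
        rw [e1, e2, h2, h3]
      · have base : structRel g f (FreeMonoid.ofList [φ y, q])
            (FreeMonoid.ofList [g (φ y) q, f q (φ y)]) := ⟨φ y, q, rfl, rfl⟩
        exact ConGen.Rel.mul (ConGen.Rel.of _ _ base) (ConGen.Rel.refl (FreeMonoid.ofList r))
  | trans h1 h2 ih1 ih2 =>
    intro φ hφ u hu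
    obtain ⟨v, hv, hrel⟩ := ih1 φ hφ u hu
    obtain ⟨w, hw, hrel'⟩ := ih2 φ hφ v hv
    exact ⟨w, hw, hrel.trans hrel'⟩

end Stmt6

open Stmt6

/-- in the structure monoid `M(X,S)` (a Garside monoid whose Garside element `Δ`
is the right lcm of `X`), a simple element (divisor of `Δ`) of length `k` has exactly `k!`
word representatives over `X`. -/
theorem stmt_6 {X : Type*} [Fintype X]
    (S : X × X → X × X) (g f : X → X → X)
    (hS : ∀ x y : X, S (x, y) = (g x y, f y x))
    (hg : ∀ x : X, Function.Bijective (g x))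
    (hf : ∀ x : X, Function.Bijective (f x))
    (hinv : ∀ p : X × X, S (S p) = p)
    (hbr : Braided S)
    (Δ : PresentedMonoid (structRel g f))
    (hΔdvd : ∀ x : X, PresentedMonoid.of (structRel g f) x ∣ Δ)
    (hΔlcm : ∀ m : PresentedMonoid (structRel g f),
      (∀ x : X, PresentedMonoid.of (structRel g f) x ∣ m) → Δ ∣ m)
    (a : PresentedMonoid (structRel g f)) (ha : a ∣ Δ)
    (k : ℕ) (w : FreeMonoid X)
    (hw : PresentedMonoid.mk (structRel g f) w = a) (hk : w.length = k) :
    Nat.card {u : FreeMonoid X // PresentedMonoid.mk (structRel g f) u = a}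
      = Nat.factorial k := by
  classical
  -- basic identities
  have hid : ∀ x y, g (g x y) (f y x) = x := by
    intro x y
    have h := hinv (x, y)
    rw [hS x y, hS (g x y) (f y x)] at h
    exact congrArg Prod.fst h
  have hY : ∀ x y z, g (g x y) (g (f y x) z) = g x (g y z) := by
    intro x y z
    have h := congrFun hbr (x, y, z)
    simp only [Function.comp_apply, S12, S23, hS] at h
    exact congrArg Prod.fst h
  -- the congruence bridge
  have hmk : ∀ u v : FreeMonoid X,
      PresentedMonoid.mk (structRel g f) u = PresentedMonoid.mk (structRel g f) v ↔ ConGen.Rel (structRel g f) u v := by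
    intro u v
    exact Con.eq (conGen (structRel g f))
  -- a representative of Δ extending w
  obtain ⟨c, hc⟩ := ha
  obtain ⟨z, hz⟩ := PresentedMonoid.surjective_mk (rels := structRel g f) c
  set e : List X := FreeMonoid.toList w ++ FreeMonoid.toList z with he
  have hee : PresentedMonoid.mk (structRel g f) (FreeMonoid.ofList e) = Δ := by
    have h1 : FreeMonoid.ofList e = w * z := rfl
    rw [h1, map_mul, hw, hz, hc]
  set n := Fintype.card X with hn
  -- an element of length n divisible by every atom
  set l₀ := (Finset.univ : Finset X).toList with hl₀
  obtain ⟨v₀, hv₀⟩ := Tm_surj g hg l₀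
  have hdvd : ∀ x : X,
      PresentedMonoid.of (structRel g f) x ∣ PresentedMonoid.mk (structRel g f) (FreeMonoid.ofList v₀) := by
    intro x
    have hx : x ∈ l₀ := by simp [hl₀]
    have hperm : l₀.Perm (x :: l₀.erase x) := List.perm_cons_erase hx
    obtain ⟨v, hv, hrel⟩ := backward g f hg hid hY hperm id Function.bijective_id v₀
      (by simpa using hv₀)
    have hv₀v : PresentedMonoid.mk (structRel g f) (FreeMonoid.ofList v₀)
        = PresentedMonoid.mk (structRel g f) (FreeMonoid.ofList v) := (hmk _ _).2 hrel
    cases v with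
    | nil => exact absurd hv (by simp [Tm])
    | cons p t =>
      obtain ⟨hp, -⟩ : p = x ∧ (Tm g t).map (g p) = l₀.erase x := by simpa [Tm] using hv
      subst hp
      exact ⟨PresentedMonoid.mk (structRel g f) (FreeMonoid.ofList t), by rw [hv₀v]; rfl⟩
  obtain ⟨c', hc'⟩ := hΔlcm _ hdvd
  obtain ⟨z', hz'⟩ := PresentedMonoid.surjective_mk (rels := structRel g f) c'
  have heq : PresentedMonoid.mk (structRel g f) (FreeMonoid.ofList e * z')
      = PresentedMonoid.mk (structRel g f) (FreeMonoid.ofList v₀) := by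
    rw [map_mul, hee, hz', ← hc']
  have hv₀n : v₀.length = n := by
    have h1 := Tm_length g v₀
    rw [hv₀] at h1
    rw [← h1, hl₀, Finset.length_toList, Finset.card_univ]
  have hlen : e.length + (FreeMonoid.toList z').length = v₀.length := by
    have hperm := (forward g f hid hY ((hmk _ _).1 heq)).1
    have h1 := hperm.length_eq
    rw [Tm_length, Tm_length] at h1
    simpa using h1
  have helen : e.length ≤ n := by omega
  have hmem : ∀ x : X, x ∈ Tm g e := by
    intro x
    obtain ⟨m, hm⟩ := hΔdvd x
    obtain ⟨t, ht⟩ := PresentedMonoid.surjective_mk (rels := structRel g f) m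
    have h1 : PresentedMonoid.mk (structRel g f) (FreeMonoid.of x * t)
        = PresentedMonoid.mk (structRel g f) (FreeMonoid.ofList e) := by
      rw [map_mul, ht, hee, hm]; rfl
    have hperm := (forward g f hid hY ((hmk _ _).1 h1)).1
    have h2 : x ∈ Tm g (FreeMonoid.toList (FreeMonoid.of x * t)) := by
      show x ∈ Tm g (x :: FreeMonoid.toList t)
      simp [Tm]
    exact hperm.mem_iff.1 h2
  have hTnd : (Tm g e).Nodup := by
    have hsub : (Tm g e).toFinset = (Finset.univ : Finset X) :=
      Finset.eq_univ_iff_forall.2 fun x => List.mem_toFinset.2 (hmem x)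
    have hcard1 : (Tm g e).toFinset.card = n := by rw [hsub, Finset.card_univ]
    have hcard2 : (Tm g e).length ≤ n := by rw [Tm_length]; exact helen
    have hcard3 : (Tm g e).toFinset.card = (Tm g e).length :=
      le_antisymm (List.toFinset_card_le _) (by omega)
    exact Multiset.coe_nodup.1 (Multiset.toFinset_card_eq_card_iff_nodup.1 hcard3)
  have hwnd : (Tm g (FreeMonoid.toList w)).Nodup := by
    rw [he, Tm_append] at hTnd
    exact hTnd.of_append_left
  set l := Tm g (FreeMonoid.toList w) with hl
  have hlk : l.length = k := by rw [hl, Tm_length]; exact hk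
  have hcard_eq : Nat.card {u : FreeMonoid X // PresentedMonoid.mk (structRel g f) u = a}
      = Nat.card {b : List X // b.Perm l} := by
    refine Nat.card_eq_of_bijective (fun s => ⟨Tm g (FreeMonoid.toList s.1),
      (forward g f hid hY ((hmk _ _).1 (s.2.trans hw.symm))).1⟩) ⟨?_, ?_⟩
    · rintro ⟨u, hu⟩ ⟨v, hv⟩ hval
      have h1 : Tm g (FreeMonoid.toList u) = Tm g (FreeMonoid.toList v) :=
        congrArg Subtype.val hval
      have h2 := Tm_inj g (fun x => (hg x).1) _ _ h1
      exact Subtype.ext (FreeMonoid.toList.injective h2)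
    · rintro ⟨b, hb⟩
      obtain ⟨v, hv, hrel⟩ := backward g f hg hid hY hb.symm id Function.bijective_id
        (FreeMonoid.toList w) (by simp [hl])
      have hmkv : PresentedMonoid.mk (structRel g f) (FreeMonoid.ofList v) = a := by
        have h3 := (hmk _ _).2 hrel
        rw [FreeMonoid.ofList_toList] at h3
        exact h3.symm.trans hw
      refine ⟨⟨FreeMonoid.ofList v, hmkv⟩, ?_⟩
      apply Subtype.ext
      show Tm g (FreeMonoid.toList (FreeMonoid.ofList v)) = b
      rw [FreeMonoid.toList_ofList, hv]
      simp
  rw [hcard_eq]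
  have e1 : {b : List X // b.Perm l} ≃ {b : List X // b ∈ l.permutations} :=
    Equiv.subtypeEquivRight fun b => List.mem_permutations.symm
  have e2 : {b : List X // b ∈ l.permutations} ≃ {b : List X // b ∈ l.permutations.toFinset} :=
    Equiv.subtypeEquivRight fun b => (List.mem_toFinset).symm
  rw [Nat.card_congr (e1.trans e2), Nat.card_eq_finsetCard,
    List.toFinset_card_of_nodup (List.nodup_permutations l hwnd),
    List.length_permutations, hlk]
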